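/- Let $G(r,t) = (4\pi t)^{-3/2} e^{-t} \frac{r}{\sinh r} e^{-r^2/(4t)}$. Then for every $\varepsilon > 0$ there exist $k > 0$ and $T > 0$ such that for all $t \ge T$: $\int_{2t - k\sqrt{t}}^{2t + k\sqrt{t}} 4\pi (\sinh r)^2\, G(r,t)\, dr \ge 1 - \varepsilon$. That is, for large times most of the mass of the fundamental solution of the heat equation on $\mathbb{H}^3$ is located in the thin annulus $\{2t - k\sqrt{t} \le r \le 2t + k\sqrt{t}\}$ around the mass line $r = 2t$. -/

import Mathlib

open Real Filter MeasureTheory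

noncomputable def hypHeatKernel (r t : ℝ) : ℝ :=
  (4 * π * t) ^ (-(3 : ℝ) / 2) * Real.exp (-t) * (r / Real.sinh r) *
    Real.exp (-r ^ 2 / (4 * t))

lemma integrand_eq (t r : ℝ) (ht : 0 < t) (hr : 0 < r) :
    4 * π * (Real.sinh r) ^ 2 * hypHeatKernel r t
      = 2 * π * ((4 * π * t) * Real.sqrt (4 * π * t))⁻¹ *
          (r * (Real.exp (-(r - 2*t)^2 / (4*t)) * (1 - Real.exp (-(2*r))))) := by
  have h1 : (0:ℝ) < 4 * π * t := by positivity
  have hrpow : (4 * π * t) ^ (-(3 : ℝ) / 2) = ((4 * π * t) * Real.sqrt (4 * π * t))⁻¹ := by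
    rw [show (-(3:ℝ)/2) = -(1 + 1/2) by norm_num, Real.rpow_neg h1.le, Real.rpow_add h1,
      Real.rpow_one, ← Real.sqrt_eq_rpow]
  have hs : Real.sinh r ≠ 0 := ne_of_gt (Real.sinh_pos_iff.mpr hr)
  have e1 : Real.exp (-t) * Real.exp (-r^2/(4*t)) * Real.exp r
      = Real.exp (-(r - 2*t)^2/(4*t)) := by
    rw [← Real.exp_add, ← Real.exp_add]; congr 1; field_simp; ring
  have e2 : Real.exp (-t) * Real.exp (-r^2/(4*t)) * Real.exp (-r)
      = Real.exp (-(r - 2*t)^2/(4*t)) * Real.exp (-(2*r)) := by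
    rw [← Real.exp_add, ← Real.exp_add, ← Real.exp_add]; congr 1; field_simp; ring
  have key : Real.exp (-t) * Real.exp (-r^2/(4*t)) * Real.sinh r
      = (Real.exp (-(r - 2*t)^2/(4*t)) * (1 - Real.exp (-(2*r)))) / 2 := by
    rw [Real.sinh_eq]
    linear_combination e1 / 2 - e2 / 2
  have hdiv : Real.sinh r ^ 2 * (r / Real.sinh r) = r * Real.sinh r := by
    field_simp [pow_two]
  unfold hypHeatKernel
  rw [hrpow]
  calc 4 * π * Real.sinh r ^ 2 *
        (((4 * π * t) * Real.sqrt (4 * π * t))⁻¹ * Real.exp (-t) * (r / Real.sinh r) *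
          Real.exp (-r ^ 2 / (4 * t)))
      = 4 * π * ((4 * π * t) * Real.sqrt (4 * π * t))⁻¹ *
          (Real.sinh r ^ 2 * (r / Real.sinh r)) *
          (Real.exp (-t) * Real.exp (-r ^ 2 / (4 * t))) := by ring
    _ = 4 * π * ((4 * π * t) * Real.sqrt (4 * π * t))⁻¹ * (r * Real.sinh r) *
          (Real.exp (-t) * Real.exp (-r ^ 2 / (4 * t))) := by rw [hdiv]
    _ = 4 * π * ((4 * π * t) * Real.sqrt (4 * π * t))⁻¹ * r *
          (Real.exp (-t) * Real.exp (-r ^ 2 / (4 * t)) * Real.sinh r) := by ring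
    _ = _ := by rw [key]; ring

lemma gauss_tendsto :
    Tendsto (fun a : ℝ => ∫ u in (-a)..a, Real.exp (-u^2)) atTop (nhds (Real.sqrt π)) := by
  have h := MeasureTheory.intervalIntegral_tendsto_integral
    (integrable_exp_neg_mul_sq (by norm_num : (0:ℝ) < 1))
    tendsto_neg_atTop_atBot (tendsto_id (α := ℝ))
  rw [integral_gaussian] at h
  simpa using h

set_option maxHeartbeats 1000000 in
/-- For large times most of the mass of the fundamental solution on `ℍ³` lies in the
thin annulus `{2t - k√t ≤ r ≤ 2t + k√t}` around the mass line `r = 2t`. -/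
theorem hypHeatKernel_mass_concentration :
    ∀ ε > (0 : ℝ), ∃ k > (0 : ℝ), ∃ T > (0 : ℝ), ∀ t ≥ T,
      1 - ε ≤ ∫ r in Set.Icc (2 * t - k * Real.sqrt t) (2 * t + k * Real.sqrt t),
        4 * π * (Real.sinh r) ^ 2 * hypHeatKernel r t := by
  intro ε hε
  have hπ : (0:ℝ) < π := pi_pos
  set δ : ℝ := min (ε/3) (1/2) with hδdef
  have hδpos : 0 < δ := lt_min (by linarith) one_half_pos
  have hδ3 : δ ≤ ε/3 := min_le_left _ _
  have hδhalf : δ ≤ 1/2 := min_le_right _ _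
  -- choose κ with Gaussian mass ≥ (1-δ)√π
  have hlt : (1-δ) * Real.sqrt π < Real.sqrt π := by
    nlinarith [Real.sqrt_pos.mpr hπ]
  obtain ⟨κ, hκint, hκ1⟩ :=
    ((Filter.Tendsto.eventually_const_le hlt gauss_tendsto).and (eventually_ge_atTop (1:ℝ))).exists
  set k : ℝ := 2 * κ with hkdef
  have hκ0 : 0 < κ := lt_of_lt_of_le one_pos hκ1
  have hk0 : 0 < k := by positivity
  refine ⟨k, hk0, k^2 + 1/δ + k^2/δ^2, by positivity, ?_⟩
  intro t ht
  have ht0 : 0 < t := lt_of_lt_of_le (by positivity) ht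
  have hst : 0 < Real.sqrt t := Real.sqrt_pos.mpr ht0
  have htt : Real.sqrt t * Real.sqrt t = t := Real.mul_self_sqrt ht0.le
  have htk : k^2 ≤ t := by
    have h1 : 0 < 1/δ := by positivity
    have h2 : 0 ≤ k^2/δ^2 := by positivity
    linarith
  have hkt : k ≤ Real.sqrt t := by
    rw [show k = Real.sqrt (k^2) from (Real.sqrt_sq hk0.le).symm]
    exact Real.sqrt_le_sqrt htk
  have hat : t ≤ 2*t - k * Real.sqrt t := by
    nlinarith [mul_le_mul_of_nonneg_right hkt hst.le]
  have ha0 : 0 < 2*t - k * Real.sqrt t := lt_of_lt_of_le ht0 hat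
  have hab : 2*t - k * Real.sqrt t ≤ 2*t + k * Real.sqrt t := by nlinarith
  -- two smallness facts
  have hx0 : 0 ≤ k/(2*Real.sqrt t) := by positivity
  have hxδ : k/(2*Real.sqrt t) ≤ δ := by
    have h5 : k/δ ≤ Real.sqrt t := by
      rw [show k/δ = Real.sqrt ((k/δ)^2) from (Real.sqrt_sq (by positivity)).symm]
      apply Real.sqrt_le_sqrt
      rw [div_pow]
      have hk2 : (0:ℝ) ≤ k^2 := sq_nonneg k
      have h1d : (0:ℝ) < 1/δ := by positivity
      linarith
    rw [div_le_iff₀ (by positivity)]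
    have := mul_le_mul_of_nonneg_left h5 hδpos.le
    rw [mul_div_cancel₀ _ (ne_of_gt hδpos)] at this
    nlinarith
  have hy0 : 0 ≤ Real.exp (-(2*t)) := (Real.exp_pos _).le
  have hyδ : Real.exp (-(2*t)) ≤ δ := by
    have h6 : 1/δ ≤ Real.exp (2*t) := by
      have h7 := Real.add_one_le_exp (2*t)
      have h8 : 1/δ ≤ t := by
        have : 0 ≤ k^2 := sq_nonneg k
        have : 0 ≤ k^2/δ^2 := by positivity
        linarith
      linarith
    have h11 : Real.exp (-(2*t)) = (Real.exp (2*t))⁻¹ := by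
      rw [← Real.exp_neg]
    rw [h11, inv_le_comm₀ (Real.exp_pos _) hδpos]
    calc δ⁻¹ = 1/δ := (one_div δ).symm
      _ ≤ Real.exp (2*t) := h6
  have h1e : 0 ≤ 1 - Real.exp (-(2*t)) := by
    have := Real.exp_le_exp.mpr (show -(2*t) ≤ 0 by linarith)
    rw [Real.exp_zero] at this
    linarith
  set a : ℝ := 2*t - k * Real.sqrt t with hadef
  set b : ℝ := 2*t + k * Real.sqrt t with hbdef
  set q : ℝ := ((4 * π * t) * Real.sqrt (4 * π * t))⁻¹ with hqdef
  have hq0 : 0 < q := by positivity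
  set C : ℝ := 2 * π * q * (a * (1 - Real.exp (-(2*t)))) with hCdef
  have hC0 : 0 ≤ C := by
    apply mul_nonneg (by positivity)
    exact mul_nonneg ha0.le h1e
  -- rewrite the set integral as an interval integral
  rw [MeasureTheory.integral_Icc_eq_integral_Ioc, ← intervalIntegral.integral_of_le hab]
  -- replace integrand with the Gaussian form
  have hcongr : Set.EqOn (fun r => 4 * π * (Real.sinh r)^2 * hypHeatKernel r t)
      (fun r => 2 * π * q *
        (r * (Real.exp (-(r - 2*t)^2 / (4*t)) * (1 - Real.exp (-(2*r)))))) (Set.uIcc a b) := by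
    intro x hx
    rw [Set.uIcc_of_le hab] at hx
    exact integrand_eq t x ht0 (lt_of_lt_of_le ha0 hx.1)
  rw [intervalIntegral.integral_congr hcongr]
  -- lower bound by a pure Gaussian
  have hpt : ∀ x ∈ Set.Icc a b,
      C * Real.exp (-(x - 2*t)^2/(4*t)) ≤
        2 * π * q * (x * (Real.exp (-(x - 2*t)^2 / (4*t)) * (1 - Real.exp (-(2*x))))) := by
    intro x hx
    obtain ⟨hx1, hx2⟩ := hx
    have hxt : t ≤ x := le_trans hat hx1
    have hE : (0:ℝ) < Real.exp (-(x - 2*t)^2/(4*t)) := Real.exp_pos _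
    have hF : Real.exp (-(2*x)) ≤ Real.exp (-(2*t)) := Real.exp_le_exp.mpr (by linarith)
    have hmono : a * (1 - Real.exp (-(2*t))) ≤ x * (1 - Real.exp (-(2*x))) := by
      calc a * (1 - Real.exp (-(2*t))) ≤ x * (1 - Real.exp (-(2*t))) :=
            mul_le_mul_of_nonneg_right hx1 h1e
        _ ≤ x * (1 - Real.exp (-(2*x))) :=
            mul_le_mul_of_nonneg_left (by linarith) (le_trans ha0.le hx1)
    have h2 := mul_le_mul_of_nonneg_right hmono hE.le
    have h3 := mul_le_mul_of_nonneg_left h2 (show (0:ℝ) ≤ 2*π*q by positivity)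
    calc C * Real.exp (-(x - 2*t)^2/(4*t))
        = 2*π*q * (a * (1 - Real.exp (-(2*t))) * Real.exp (-(x - 2*t)^2/(4*t))) := by
          rw [hCdef]; ring
      _ ≤ 2*π*q * (x * (1 - Real.exp (-(2*x))) * Real.exp (-(x - 2*t)^2/(4*t))) := h3
      _ = 2 * π * q * (x * (Real.exp (-(x - 2*t)^2 / (4*t)) * (1 - Real.exp (-(2*x))))) := by
          ring
  have hint1 : IntervalIntegrable (fun x => C * Real.exp (-(x - 2*t)^2/(4*t))) volume a b := by
    apply Continuous.intervalIntegrable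
    fun_prop
  have hint2 : IntervalIntegrable (fun x => 2 * π * q *
      (x * (Real.exp (-(x - 2*t)^2 / (4*t)) * (1 - Real.exp (-(2*x)))))) volume a b := by
    apply Continuous.intervalIntegrable
    fun_prop
  have hmono2 := intervalIntegral.integral_mono_on hab hint1 hint2 hpt
  -- compute the Gaussian integral by substitution
  have hsub : ∫ x in a..b, Real.exp (-(x - 2*t)^2/(4*t))
      = 2 * Real.sqrt t * ∫ u in (-κ)..κ, Real.exp (-u^2) := by
    have hc : (2 * Real.sqrt t) ≠ 0 := by positivity
    have hcv := intervalIntegral.integral_comp_mul_add (a := -κ) (b := κ)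
      (fun x => Real.exp (-(x - 2*t)^2/(4*t))) hc (2*t)
    have hend1 : 2 * Real.sqrt t * -κ + 2*t = a := by rw [hadef, hkdef]; ring
    have hend2 : 2 * Real.sqrt t * κ + 2*t = b := by rw [hbdef, hkdef]; ring
    rw [hend1, hend2] at hcv
    have hgauss : ∀ x : ℝ, Real.exp (-(2 * Real.sqrt t * x + 2*t - 2*t)^2/(4*t))
        = Real.exp (-x^2) := by
      intro x
      congr 1
      field_simp
      linear_combination (-4*x^2) * (Real.sq_sqrt ht0.le)
    simp only [hgauss] at hcv
    rw [smul_eq_mul] at hcv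
    rw [hcv, ← mul_assoc, mul_inv_cancel₀ hc, one_mul]
  rw [intervalIntegral.integral_const_mul] at hmono2
  rw [hsub] at hmono2
  refine le_trans ?_ hmono2
  -- final numeric estimate
  have hsqπ : Real.sqrt π * Real.sqrt π = π := Real.mul_self_sqrt hπ.le
  have hsπ : 0 < Real.sqrt π := Real.sqrt_pos.mpr hπ
  have h4 : Real.sqrt (4*π*t) = 2 * Real.sqrt π * Real.sqrt t := by
    rw [Real.sqrt_mul (by positivity) t, Real.sqrt_mul (by norm_num) π,
      show Real.sqrt 4 = 2 by rw [show (4:ℝ) = 2^2 by norm_num, Real.sqrt_sq]; norm_num]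
  have hCval : C * (2 * Real.sqrt t * ((1-δ) * Real.sqrt π))
      = (1-δ) * (a/(2*t) * (1 - Real.exp (-(2*t)))) := by
    rw [hCdef, hqdef, h4]
    field_simp
    ring
  have hstep : C * (2 * Real.sqrt t * ((1-δ) * Real.sqrt π))
      ≤ C * (2 * Real.sqrt t * ∫ u in (-κ)..κ, Real.exp (-u^2)) := by
    apply mul_le_mul_of_nonneg_left _ hC0
    apply mul_le_mul_of_nonneg_left hκint (by positivity)
  refine le_trans ?_ hstep
  rw [hCval]
  have haf : a/(2*t) = 1 - k/(2*Real.sqrt t) := by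
    rw [hadef]
    field_simp
    linear_combination (-2*κ) * (Real.sq_sqrt ht0.le)
  rw [haf]
  nlinarith [mul_nonneg hx0 hy0, mul_nonneg hδpos.le hx0, mul_nonneg hδpos.le hy0,
    mul_nonneg (mul_nonneg hx0 hy0) (show (0:ℝ) ≤ 1 - δ by linarith),
    mul_nonneg (mul_nonneg hx0 hy0) hδpos.le]
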